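/- (Conditional probability decomposition over component) Let Ψ = Ψ_i(E') with the SCC C of G_i(Ψ) containing a vertex u ∈ W_{i+1}. Then Pr[S⇝C | Ψ] = p_{e_i} · Pr[S⇝hi(C) | hi(Ψ)] + (1−p_{e_i}) · Pr[S⇝lo(C) | lo(Ψ)], where hi(C) (resp. lo(C)) is the SCC of G_{i+1}(hi(Ψ)) (resp. G_{i+1}(lo(Ψ))) containing u, interpreted as probability 1 when u becomes reachable from S after adding e_i. -/

import Mathlib

open scoped Classical
open Finset

noncomputable section

/-- `inc src tgt e x` : edge `e` is incident to vertex `x`. -/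
def inc {V : Type*} (src tgt : ℕ → V) (e : ℕ) (x : V) : Prop := src e = x ∨ tgt e = x

/-- Reachability in the subgraph with edge set `A`. -/
def Reach {V : Type*} (src tgt : ℕ → V) (A : Finset ℕ) (x y : V) : Prop :=
  Relation.ReflTransGen (fun a b => ∃ e ∈ A, src e = a ∧ tgt e = b) x y

/-- `v` is reachable from some vertex of `S` in the subgraph with edge set `A`. -/
def SReach {V : Type*} (src tgt : ℕ → V) (A : Finset ℕ) (S : Finset V) (v : V) : Prop :=
  ∃ s ∈ S, Reach src tgt A s v

/-- Probability that exactly the edges in `X` (among `e_0,…,e_{m-1}`) are present. -/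
def prW (p : ℕ → ℝ) (m : ℕ) (X : Finset ℕ) : ℝ :=
  (∏ e ∈ X, p e) * ∏ e ∈ Finset.range m \ X, (1 - p e)

/-- Probability that `v` is reachable from the seed set `S`. -/
def probReach {V : Type*} (src tgt : ℕ → V) (p : ℕ → ℝ) (m : ℕ) (S : Finset V) (v : V) : ℝ :=
  ∑ X ∈ (Finset.range m).powerset, if SReach src tgt X S v then prW p m X else 0

/-- Conditional probability of `event` given that all edges in `A` are present and
all edges in `B` are absent. -/
def condP (p : ℕ → ℝ) (m : ℕ) (A B : Finset ℕ) (event : Finset ℕ → Prop) : ℝ :=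
  (∑ X ∈ (Finset.range m).powerset,
      if A ⊆ X ∧ X ∩ B = ∅ ∧ event X then prW p m X else 0) /
  (∑ X ∈ (Finset.range m).powerset, if A ⊆ X ∧ X ∩ B = ∅ then prW p m X else 0)

/-- The frontier `W_i`: vertices incident both to an edge of `E_{<i}` and to an edge of
`E_{≥ i}` (as a set). -/
def frontSet {V : Type*} (src tgt : ℕ → V) (m i : ℕ) : Set V :=
  {x | (∃ e ∈ Finset.range i, inc src tgt e x) ∧
       ∃ e ∈ Finset.range m \ Finset.range i, inc src tgt e x}

/-- The frontier `W_i` as a finset. -/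
def front {V : Type*} [Fintype V] (src tgt : ℕ → V) (m i : ℕ) : Finset V :=
  Finset.univ.filter fun x =>
    (∃ e ∈ Finset.range i, inc src tgt e x) ∧
    ∃ e ∈ Finset.range m \ Finset.range i, inc src tgt e x

/-- The shared transversal configuration `Ψ_i(A)`: the set of frontier vertices reachable
from `S`, together with the reachability relation among unreached frontier vertices. -/
def Psi {V : Type*} [Fintype V] (src tgt : ℕ → V) (m : ℕ) (S : Finset V) (i : ℕ)
    (A : Finset ℕ) : Finset V × Finset (V × V) :=
  ((front src tgt m i).filter fun x => SReach src tgt A S x,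
   ((front src tgt m i) ×ˢ (front src tgt m i)).filter fun q =>
     ¬ SReach src tgt A S q.1 ∧ Reach src tgt A q.1 q.2)

/-- The transversal configuration `Φ_i^v(A)`: the sets `W_i^{S⇝}`, `W_i^{⇝v}`, the
reachability matrix on the remaining rows/columns (with extra column `v`), and the
entry `Φ_{S,v}`. -/
def Phi {V : Type*} [Fintype V] (src tgt : ℕ → V) (m : ℕ) (S : Finset V) (i : ℕ) (v : V)
    (A : Finset ℕ) : Finset V × Finset V × Finset (V × V) × Prop :=
  ((front src tgt m i).filter fun x => SReach src tgt A S x,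
   (front src tgt m i).filter fun x => Reach src tgt A x v,
   (((front src tgt m i) ∪ {v}) ×ˢ ((front src tgt m i) ∪ {v})).filter fun q =>
     (q.1 ∈ front src tgt m i ∧ ¬ SReach src tgt A S q.1) ∧
     (q.2 = v ∨ (q.2 ∈ front src tgt m i ∧ ¬ Reach src tgt A q.2 v)) ∧
     Reach src tgt A q.1 q.2,
   SReach src tgt A S v)

/-- Probability that the shared transversal configuration `Ψ` appears at level `i`. -/
def PrPsi {V : Type*} [Fintype V] (src tgt : ℕ → V) (p : ℕ → ℝ) (m : ℕ) (S : Finset V)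
    (i : ℕ) (Ψ : Finset V × Finset (V × V)) : ℝ :=
  ∑ A ∈ (Finset.range i).powerset,
    if Psi src tgt m S i A = Ψ then
      (∏ e ∈ A, p e) * ∏ e ∈ Finset.range i \ A, (1 - p e)
    else 0

/-- `IsWalk src tgt A x y es`: `es` is a directed walk from `x` to `y` using edges in `A`. -/
def IsWalk {V : Type*} (src tgt : ℕ → V) (A : Finset ℕ) : V → V → List ℕ → Prop
  | x, y, [] => x = y
  | x, y, e :: es => e ∈ A ∧ src e = x ∧ IsWalk src tgt A (tgt e) y es


lemma reach_mono' {V : Type*} (src tgt : ℕ → V) {A X : Finset ℕ} (h : A ⊆ X) {x y : V}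
    (hr : Reach src tgt A x y) : Reach src tgt X x y :=
  Relation.ReflTransGen.mono (r := fun a b => ∃ e ∈ A, src e = a ∧ tgt e = b)
    (p := fun a b => ∃ e ∈ X, src e = a ∧ tgt e = b)
    (fun a b ⟨e, he, h1, h2⟩ => ⟨e, h he, h1, h2⟩) x y hr

lemma denom_eq (p : ℕ → ℝ) (m : ℕ) (A B : Finset ℕ)
    (hA : A ⊆ Finset.range m) (hB : B ⊆ Finset.range m) (hAB : Disjoint A B) :
    (∑ X ∈ (Finset.range m).powerset, if A ⊆ X ∧ X ∩ B = ∅ then prW p m X else 0)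
      = (∏ e ∈ A, p e) * ∏ e ∈ B, (1 - p e) := by
  classical
  set F := Finset.range m \ (A ∪ B) with hF
  have hFA : ∀ e ∈ F, e ∉ A := by intro e he; simp [hF] at he; exact he.2.1
  have hFB : ∀ e ∈ F, e ∉ B := by intro e he; simp [hF] at he; exact he.2.2
  have step1 : (∑ X ∈ (Finset.range m).powerset, if A ⊆ X ∧ X ∩ B = ∅ then prW p m X else 0)
      = ∑ X ∈ (Finset.range m).powerset.filter (fun X => A ⊆ X ∧ X ∩ B = ∅), prW p m X := by
    rw [Finset.sum_filter]
  rw [step1]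
  have step2 : ∑ X ∈ (Finset.range m).powerset.filter (fun X => A ⊆ X ∧ X ∩ B = ∅), prW p m X
      = ∑ Y ∈ F.powerset, prW p m (A ∪ Y) := by
    apply Finset.sum_bij' (fun X _ => X ∩ F) (fun Y _ => A ∪ Y)
    · intro X hX
      simp only [Finset.mem_powerset]
      exact Finset.inter_subset_right
    · intro Y hY
      simp only [Finset.mem_powerset] at hY
      simp only [Finset.mem_filter, Finset.mem_powerset]
      refine ⟨Finset.union_subset hA (hY.trans (Finset.sdiff_subset)), Finset.subset_union_left, ?_⟩
      rw [Finset.eq_empty_iff_forall_notMem]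
      intro e he
      simp only [Finset.mem_inter, Finset.mem_union] at he
      rcases he.1 with h | h
      · exact (Finset.disjoint_left.mp hAB h) he.2
      · exact hFB e (hY h) he.2
    · intro X hX
      simp only [Finset.mem_filter, Finset.mem_powerset] at hX
      obtain ⟨hXr, hAX, hXB⟩ := hX
      ext e
      simp only [Finset.mem_union, Finset.mem_inter, hF, Finset.mem_sdiff]
      constructor
      · rintro (h | h)
        · exact hAX h
        · exact h.1
      · intro he
        by_cases heA : e ∈ A
        · exact Or.inl heA
        · refine Or.inr ⟨he, hXr he, ?_⟩
          rintro (h | h)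
          · exact heA h
          · exact (Finset.eq_empty_iff_forall_notMem.mp hXB e) (Finset.mem_inter.mpr ⟨he, h⟩)
    · intro Y hY
      simp only [Finset.mem_powerset] at hY
      ext e
      simp only [Finset.mem_inter, Finset.mem_union]
      constructor
      · rintro ⟨h | h, hf⟩
        · exact absurd h (hFA e hf)
        · exact h
      · intro h; exact ⟨Or.inr h, hY h⟩
    · intro X hX
      simp only [Finset.mem_filter, Finset.mem_powerset] at hX
      obtain ⟨hXr, hAX, hXB⟩ := hX
      congr 1
      ext e
      simp only [Finset.mem_union, Finset.mem_inter, hF, Finset.mem_sdiff]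
      constructor
      · intro he
        by_cases heA : e ∈ A
        · exact Or.inl heA
        · refine Or.inr ⟨he, hXr he, ?_⟩
          rintro (h | h)
          · exact heA h
          · exact (Finset.eq_empty_iff_forall_notMem.mp hXB e) (Finset.mem_inter.mpr ⟨he, h⟩)
      · rintro (h | h)
        · exact hAX h
        · exact h.1
  rw [step2]
  have key : ∀ Y ∈ F.powerset, prW p m (A ∪ Y)
      = ((∏ e ∈ A, p e) * ∏ e ∈ B, (1 - p e)) *
        ((∏ e ∈ Y, p e) * ∏ e ∈ F \ Y, (1 - p e)) := by
    intro Y hY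
    simp only [Finset.mem_powerset] at hY
    have hdisjAY : Disjoint A Y := by
      rw [Finset.disjoint_right]; intro e he; exact hFA e (hY he)
    have hsplit : Finset.range m \ (A ∪ Y) = B ∪ (F \ Y) := by
      ext e
      simp only [Finset.mem_sdiff, Finset.mem_union, hF]
      constructor
      · rintro ⟨hr, h⟩
        push_neg at h
        by_cases heB : e ∈ B
        · exact Or.inl heB
        · exact Or.inr ⟨⟨hr, by simp [h.1, heB]⟩, h.2⟩
      · rintro (h | h)
        · refine ⟨hB h, ?_⟩
          push_neg
          exact ⟨fun hc => Finset.disjoint_right.mp hAB h hc, fun hc => hFB e (hY hc) h⟩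
        · obtain ⟨⟨hr, hnot⟩, hnY⟩ := h
          refine ⟨hr, ?_⟩
          push_neg
          exact ⟨fun hc => hnot (Or.inl hc), hnY⟩
    have hdisjB : Disjoint B (F \ Y) := by
      rw [Finset.disjoint_left]
      intro e he hc
      exact hFB e (Finset.mem_sdiff.mp hc).1 he
    rw [prW, Finset.prod_union hdisjAY, hsplit, Finset.prod_union hdisjB]
    ring
  rw [Finset.sum_congr rfl key, ← Finset.mul_sum, ← Finset.prod_add]
  have : ∏ e ∈ F, (p e + (1 - p e)) = 1 := by
    apply Finset.prod_eq_one; intro e _; ring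
  rw [this, mul_one]

lemma num_split (p : ℕ → ℝ) (m i : ℕ) (A B : Finset ℕ) (ev : Finset ℕ → Prop)
    (hiA : i ∉ A) (hiB : i ∉ B) :
    (∑ X ∈ (Finset.range m).powerset, if A ⊆ X ∧ X ∩ B = ∅ ∧ ev X then prW p m X else 0)
    = (∑ X ∈ (Finset.range m).powerset,
        if insert i A ⊆ X ∧ X ∩ B = ∅ ∧ ev X then prW p m X else 0)
    + (∑ X ∈ (Finset.range m).powerset,
        if A ⊆ X ∧ X ∩ insert i B = ∅ ∧ ev X then prW p m X else 0) := by
  classical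
  rw [← Finset.sum_add_distrib]
  apply Finset.sum_congr rfl
  intro X _
  have h2 : X ∩ insert i B = ∅ ↔ i ∉ X ∧ X ∩ B = ∅ := by
    constructor
    · intro h
      constructor
      · intro hx
        have : i ∈ X ∩ insert i B := Finset.mem_inter.mpr ⟨hx, Finset.mem_insert_self i B⟩
        rw [h] at this
        exact absurd this (Finset.notMem_empty i)
      · rw [Finset.eq_empty_iff_forall_notMem] at h ⊢
        intro e he
        rcases Finset.mem_inter.mp he with ⟨heX, heB⟩
        exact h e (Finset.mem_inter.mpr ⟨heX, Finset.mem_insert_of_mem heB⟩)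
    · rintro ⟨h1, hrest⟩
      rw [Finset.eq_empty_iff_forall_notMem] at hrest ⊢
      intro e he
      rcases Finset.mem_inter.mp he with ⟨heX, heI⟩
      rcases Finset.mem_insert.mp heI with rfl | hb
      · exact h1 heX
      · exact hrest e (Finset.mem_inter.mpr ⟨heX, hb⟩)
  by_cases hiX : i ∈ X
  · have hn : ¬(A ⊆ X ∧ X ∩ insert i B = ∅ ∧ ev X) := by
      rintro ⟨_, hb, _⟩; exact (h2.mp hb).1 hiX
    rw [if_neg hn, add_zero]
    apply if_congr _ rfl rfl
    rw [Finset.insert_subset_iff]; tauto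
  · have hn : ¬(insert i A ⊆ X ∧ X ∩ B = ∅ ∧ ev X) := by
      rintro ⟨hs, _, _⟩; exact hiX (hs (Finset.mem_insert_self i A))
    rw [if_neg hn, zero_add]
    apply if_congr _ rfl rfl
    rw [h2]; tauto

lemma condP_congr (p : ℕ → ℝ) (m : ℕ) (A B : Finset ℕ) (ev1 ev2 : Finset ℕ → Prop)
    (h : ∀ X, A ⊆ X → (ev1 X ↔ ev2 X)) :
    condP p m A B ev1 = condP p m A B ev2 := by
  unfold condP
  congr 1
  apply Finset.sum_congr rfl
  intro X _
  refine if_congr ?_ rfl rfl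
  constructor
  · rintro ⟨h1, h2, h3⟩; exact ⟨h1, h2, (h X h1).mp h3⟩
  · rintro ⟨h1, h2, h3⟩; exact ⟨h1, h2, (h X h1).mpr h3⟩

lemma condP_split (p : ℕ → ℝ) (m i : ℕ) (A B : Finset ℕ) (ev : Finset ℕ → Prop)
    (him : i ∈ Finset.range m) (hiA : i ∉ A) (hiB : i ∉ B)
    (hAm : A ⊆ Finset.range m) (hBm : B ⊆ Finset.range m) (hAB : Disjoint A B)
    (hpi1 : 0 < p i) (hpi2 : p i < 1) :
    condP p m A B ev
      = p i * condP p m (insert i A) B ev + (1 - p i) * condP p m A (insert i B) ev := by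
  unfold condP
  rw [denom_eq p m A B hAm hBm hAB,
    denom_eq p m (insert i A) B (Finset.insert_subset him hAm) hBm
      (by rw [Finset.disjoint_insert_left]; exact ⟨hiB, hAB⟩),
    denom_eq p m A (insert i B) hAm (Finset.insert_subset him hBm)
      (by rw [Finset.disjoint_insert_right]; exact ⟨hiA, hAB⟩),
    Finset.prod_insert hiA, Finset.prod_insert hiB,
    num_split p m i A B ev hiA hiB]
  set N1 := ∑ X ∈ (Finset.range m).powerset,
    if insert i A ⊆ X ∧ X ∩ B = ∅ ∧ ev X then prW p m X else 0 with hN1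
  set N2 := ∑ X ∈ (Finset.range m).powerset,
    if A ⊆ X ∧ X ∩ insert i B = ∅ ∧ ev X then prW p m X else 0 with hN2
  set PA := ∏ e ∈ A, p e with hPA
  set PB := ∏ e ∈ B, (1 - p e) with hPB
  have g1 : p i * (N1 / (p i * PA * PB)) = N1 / (PA * PB) := by
    rw [mul_assoc, mul_div_assoc', mul_div_mul_left _ _ (ne_of_gt hpi1)]
  have g2 : (1 - p i) * (N2 / (PA * ((1 - p i) * PB))) = N2 / (PA * PB) := by
    rw [show PA * ((1 - p i) * PB) = (1 - p i) * (PA * PB) by ring,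
      mul_div_assoc', mul_div_mul_left _ _ (by linarith : (1 : ℝ) - p i ≠ 0)]
  rw [add_div, g1, g2]

/-- Conditional probability decomposition over a strongly connected component: if `C` is
the SCC of `G_i(Ψ_i(A))` containing `u`, and `u` remains a frontier vertex at level
`i+1`, then the conditional probability that `S` reaches `C` decomposes by the status of
the edge `e_i` (the successive components being those of `u`, with the convention that
the probability is `1` when `u` becomes reachable from `S`). -/
theorem stmt17 {V : Type*} [Fintype V] (src tgt : ℕ → V) (p : ℕ → ℝ) (m : ℕ)
    (hp : ∀ e ∈ Finset.range m, 0 < p e ∧ p e < 1)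
    (S : Finset V) (i : ℕ) (hi : i < m) (A : Finset ℕ) (hA : A ⊆ Finset.range i)
    (u : V) (C : Set V)
    (huW : u ∈ front src tgt m i) (huW1 : u ∈ front src tgt m (i + 1))
    (huS : ¬ SReach src tgt A S u)
    (hC : ∀ x, x ∈ C ↔ x ∈ front src tgt m i ∧ ¬ SReach src tgt A S x ∧
      Reach src tgt A u x ∧ Reach src tgt A x u) :
    condP p m A (Finset.range i \ A) (fun X => ∃ x ∈ C, SReach src tgt X S x)
      = p i * condP p m (insert i A) (Finset.range (i + 1) \ insert i A)
            (fun X => SReach src tgt X S u)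
        + (1 - p i) * condP p m A (Finset.range (i + 1) \ A)
            (fun X => SReach src tgt X S u) := by
  classical
  set B := Finset.range i \ A with hB
  have hiA : i ∉ A := fun h => Nat.lt_irrefl i (Finset.mem_range.mp (hA h))
  have hiB : i ∉ B := by simp [hB]
  have him : i ∈ Finset.range m := Finset.mem_range.mpr hi
  have hAm : A ⊆ Finset.range m := hA.trans (Finset.range_subset_range.mpr (le_of_lt hi))
  have hBm : B ⊆ Finset.range m :=
    (Finset.sdiff_subset).trans (Finset.range_subset_range.mpr (le_of_lt hi))
  have hAB : Disjoint A B := Finset.disjoint_sdiff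
  have e1 : Finset.range (i + 1) \ insert i A = B := by
    ext e
    simp only [Finset.mem_sdiff, Finset.mem_range, Finset.mem_insert, hB, Nat.lt_succ_iff]
    constructor
    · rintro ⟨h1, h2⟩
      push_neg at h2
      exact ⟨lt_of_le_of_ne h1 h2.1, h2.2⟩
    · rintro ⟨h1, h2⟩
      refine ⟨le_of_lt h1, ?_⟩
      push_neg
      exact ⟨Nat.ne_of_lt h1, h2⟩
  have e2 : Finset.range (i + 1) \ A = insert i B := by
    ext e
    simp only [Finset.mem_sdiff, Finset.mem_range, Finset.mem_insert, hB, Nat.lt_succ_iff]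
    constructor
    · rintro ⟨h1, h2⟩
      rcases eq_or_lt_of_le h1 with h | h
      · exact Or.inl h
      · exact Or.inr ⟨h, h2⟩
    · rintro (rfl | ⟨h1, h2⟩)
      · exact ⟨le_refl e, hiA⟩
      · exact ⟨le_of_lt h1, h2⟩
  have hev : ∀ X : Finset ℕ, A ⊆ X →
      ((∃ x ∈ C, SReach src tgt X S x) ↔ SReach src tgt X S u) := by
    intro X hAX
    constructor
    · rintro ⟨x, hxC, s, hs, hr⟩
      have hx := (hC x).mp hxC
      exact ⟨s, hs, hr.trans (reach_mono' src tgt hAX hx.2.2.2)⟩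
    · intro h
      exact ⟨u, (hC u).mpr ⟨huW, huS, Relation.ReflTransGen.refl, Relation.ReflTransGen.refl⟩, h⟩
  obtain ⟨hpi1, hpi2⟩ := hp i him
  rw [e1, e2, condP_congr p m A B _ _ hev,
    condP_split p m i A B (fun X => SReach src tgt X S u) him hiA hiB hAm hBm hAB hpi1 hpi2]

end
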